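/- Let L be an infinite locally compact Hausdorff topological space and let 𝒜 be a somewhat regular closed linear subspace of C₀(L). Then for every real number ε with 0 < ε < 1 there exists a linear map S from the space c₀ (of real sequences converging to 0, with the supremum norm) into 𝒜 such that (1 − ε)‖a‖ ≤ ‖Sa‖ ≤ (1 + ε)‖a‖ for every a ∈ c₀; in particular, S is an ε-isometry from c₀ onto the closed linear subspace S(c₀) of 𝒜. -/

import Mathlib

open scoped ZeroAtInfty

/-- A linear subspace `𝒜` of `C₀(L, ℝ)` is *somewhat regular* if for every non-empty open
subset `V` of `L` and every `ε` with `0 < ε < 1` there is `f ∈ 𝒜` with `‖f‖ = 1` and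
`|f x| ≤ ε` for every `x ∈ L \ V`. -/
def SomewhatRegular {L : Type*} [TopologicalSpace L]
    (𝒜 : Submodule ℝ C₀(L, ℝ)) : Prop :=
  ∀ V : Set L, IsOpen V → V.Nonempty → ∀ ε : ℝ, 0 < ε → ε < 1 →
    ∃ f ∈ 𝒜, ‖f‖ = 1 ∧ ∀ x ∉ V, |f x| ≤ ε

open Filter Topology Set

namespace SRC0Aux

lemma c0_abs_le {α : Type*} [TopologicalSpace α] (g : C₀(α, ℝ)) (x : α) : |g x| ≤ ‖g‖ := by
  rw [← ZeroAtInftyContinuousMap.norm_toBCF_eq_norm, ← Real.norm_eq_abs]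
  exact BoundedContinuousFunction.norm_coe_le_norm g.toBCF x

lemma c0_norm_le {α : Type*} [TopologicalSpace α] (g : C₀(α, ℝ)) {C : ℝ}
    (hC : 0 ≤ C) (h : ∀ x, |g x| ≤ C) : ‖g‖ ≤ C := by
  rw [← ZeroAtInftyContinuousMap.norm_toBCF_eq_norm]
  exact (BoundedContinuousFunction.norm_le hC).mpr (by simpa [Real.norm_eq_abs] using h)

noncomputable def evalCLM {α : Type*} [TopologicalSpace α] (x : α) :
    C₀(α, ℝ) →L[ℝ] ℝ :=
  LinearMap.mkContinuous
    { toFun := fun f => f x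
      map_add' := fun f g => by simp
      map_smul' := fun c f => by simp }
    1 (fun f => by simpa [Real.norm_eq_abs] using c0_abs_le f x)

@[simp] lemma evalCLM_apply {α : Type*} [TopologicalSpace α] (x : α) (f : C₀(α, ℝ)) :
    evalCLM x f = f x := rfl

lemma step {L : Type*} [TopologicalSpace L] [T2Space L] {V : Set L}
    (hVo : IsOpen V) (hVi : V.Infinite) :
    ∃ U W : Set L, IsOpen U ∧ U.Nonempty ∧ IsOpen W ∧ W.Infinite ∧
      Disjoint U W ∧ U ⊆ V ∧ W ⊆ V := by
  obtain ⟨a, ha, b, hb, hab⟩ := hVi.nontrivial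
  obtain ⟨A, B, hA, hB, haA, hbB, hAB⟩ := t2_separation hab
  by_cases h : (A ∩ V).Infinite
  · exact ⟨B ∩ V, A ∩ V, hB.inter hVo, ⟨b, hbB, hb⟩, hA.inter hVo, h,
      (hAB.mono inter_subset_left inter_subset_left).symm, inter_subset_right,
      inter_subset_right⟩
  · have hfin : (A ∩ V).Finite := not_infinite.mp h
    refine ⟨{a}, V \ {a}, ?_, singleton_nonempty a, hVo.sdiff isClosed_singleton,
      hVi.diff (finite_singleton a),
      disjoint_sdiff_self_right, singleton_subset_iff.mpr ha, diff_subset⟩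
    have heq : ({a} : Set L) = (A ∩ V) \ ((A ∩ V) \ {a}) := by
      ext x
      simp only [mem_singleton_iff, mem_diff, mem_inter_iff, not_and, not_not]
      constructor
      · rintro rfl; exact ⟨⟨haA, ha⟩, fun _ => rfl⟩
      · rintro ⟨hx, h2⟩; exact h2 hx
    rw [heq]
    exact (hA.inter hVo).sdiff hfin.diff.isClosed

lemma exists_family (L : Type*) [TopologicalSpace L] [T2Space L] [Infinite L] :
    ∃ U : ℕ → Set L, (∀ n, IsOpen (U n)) ∧ (∀ n, (U n).Nonempty) ∧
      ∀ m n, m ≠ n → Disjoint (U m) (U n) := by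
  have key : ∀ V : {V : Set L // IsOpen V ∧ V.Infinite},
      ∃ p : Set L × {W : Set L // IsOpen W ∧ W.Infinite},
        IsOpen p.1 ∧ p.1.Nonempty ∧ Disjoint p.1 p.2.1 ∧ p.1 ⊆ V.1 ∧ p.2.1 ⊆ V.1 := by
    rintro ⟨V, hVo, hVi⟩
    obtain ⟨U, W, h1, h2, h3, h4, h5, h6, h7⟩ := step hVo hVi
    exact ⟨(U, ⟨W, h3, h4⟩), h1, h2, h5, h6, h7⟩
  choose p h1 h2 h3 h4 h5 using key
  set g : ℕ → {V : Set L // IsOpen V ∧ V.Infinite} :=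
    fun n => (fun V => (p V).2)^[n] ⟨Set.univ, isOpen_univ, Set.infinite_univ⟩ with hg
  have hgsucc : ∀ n, g (n + 1) = (p (g n)).2 := fun n => Function.iterate_succ_apply' _ _ _
  have mono : ∀ n k, ((g (n + k)) : Set L) ⊆ (g n : Set L) := by
    intro n k
    induction k with
    | zero => exact subset_rfl
    | succ k ih =>
      have : ((g (n + k + 1)) : Set L) ⊆ (g (n + k) : Set L) := by
        rw [hgsucc (n + k)]; exact h5 _
      exact this.trans ih
  refine ⟨fun n => (p (g n)).1, fun n => h1 _, fun n => h2 _, ?_⟩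
  have main : ∀ m n, m < n → Disjoint (p (g m)).1 ((p (g n)).1 : Set L) := by
    intro m n hmn
    have h6 : ((p (g n)).1 : Set L) ⊆ (g (m + 1) : Set L) := by
      obtain ⟨k, rfl⟩ := Nat.exists_eq_add_of_le hmn
      exact (h4 (g (m + 1 + k))).trans (mono (m + 1) k)
    exact ((h3 (g m)).mono_right (by rw [← hgsucc m] at *; exact h6))
  intro m n hmn
  rcases lt_or_gt_of_ne hmn with h | h
  · exact main m n h
  · exact (main n m h).symm

end SRC0Aux

open SRC0Aux

/-- A somewhat regular closed linear subspace `𝒜` of `C₀(L)` contains, for every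
`0 < ε < 1`, an `ε`-isometric copy of `c₀` (realized here as `C₀(ℕ, ℝ)`, the space of real
sequences converging to `0` with the supremum norm): there is a linear map `S : c₀ → 𝒜`
with `(1 - ε)‖a‖ ≤ ‖S a‖ ≤ (1 + ε)‖a‖` for every `a ∈ c₀`; in particular `S` is an
`ε`-isometry from `c₀` onto its (closed) range in `𝒜`. -/
theorem somewhat_regular_contains_c0
    {L : Type*} [TopologicalSpace L] [LocallyCompactSpace L] [T2Space L] [Infinite L]
    (𝒜 : Submodule ℝ C₀(L, ℝ)) (hclosed : IsClosed (𝒜 : Set C₀(L, ℝ)))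
    (h𝒜 : SomewhatRegular 𝒜)
    (ε : ℝ) (hε0 : 0 < ε) (hε1 : ε < 1) :
    ∃ S : C₀(ℕ, ℝ) →ₗ[ℝ] 𝒜,
      ∀ a : C₀(ℕ, ℝ), (1 - ε) * ‖a‖ ≤ ‖S a‖ ∧ ‖S a‖ ≤ (1 + ε) * ‖a‖ := by
  classical
  obtain ⟨U, hUo, hUne, hUd⟩ := exists_family L
  set δ : ℕ → ℝ := fun n => ε / 4 * (1 / 2) ^ n with hδdef
  have hδpos : ∀ n, 0 < δ n := fun n => by positivity
  have hδlt : ∀ n, δ n ≤ ε / 4 := by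
    intro n
    have h1 : ((1 : ℝ) / 2) ^ n ≤ 1 := pow_le_one₀ (by norm_num) (by norm_num)
    calc δ n = ε / 4 * (1 / 2) ^ n := rfl
      _ ≤ ε / 4 * 1 := by
          exact mul_le_mul_of_nonneg_left h1 (by positivity)
      _ = ε / 4 := mul_one _
  have hδ1 : ∀ n, δ n < 1 := fun n => lt_of_le_of_lt (hδlt n) (by linarith)
  have hδsum : Summable δ := (summable_geometric_two).mul_left _
  have hδtsum : ∑' n, δ n = ε / 2 := by
    rw [hδdef, tsum_mul_left, tsum_geometric_two]; ring
  have hδfin : ∀ t : Finset ℕ, ∑ n ∈ t, δ n ≤ ε / 2 :=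
    fun t => hδtsum ▸ Summable.sum_le_tsum t (fun n _ => (hδpos n).le) hδsum
  have hf' : ∀ n, ∃ f ∈ 𝒜, ‖f‖ = 1 ∧ ∀ x ∉ U n, |f x| ≤ δ n :=
    fun n => h𝒜 (U n) (hUo n) (hUne n) (δ n) (hδpos n) (hδ1 n)
  choose f hfm hfn hfs using hf'
  -- key finite estimate
  have key : ∀ (a : ℕ → ℝ) (t : Finset ℕ) (M : ℝ), 0 ≤ M → (∀ n ∈ t, |a n| ≤ M) →
      ‖∑ n ∈ t, a n • f n‖ ≤ M + ∑ n ∈ t, |a n| * δ n := by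
    intro a t M hM haM
    have hsumnn : (0 : ℝ) ≤ ∑ n ∈ t, |a n| * δ n :=
      Finset.sum_nonneg fun n _ => mul_nonneg (abs_nonneg _) (hδpos n).le
    refine c0_norm_le _ (by linarith) fun x => ?_
    have hx : (∑ n ∈ t, a n • f n) x = ∑ n ∈ t, a n * f n x := by
      rw [show (∑ n ∈ t, a n • f n) x = evalCLM x (∑ n ∈ t, a n • f n) from rfl, map_sum]
      exact Finset.sum_congr rfl fun n _ => rfl
    rw [hx]
    by_cases hmem : ∃ m ∈ t, x ∈ U m
    · obtain ⟨m, hmt, hxm⟩ := hmem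
      rw [← Finset.add_sum_erase _ _ hmt]
      have h1 : |a m * f m x| ≤ M := by
        rw [abs_mul]
        calc |a m| * |f m x| ≤ M * 1 :=
          mul_le_mul (haM m hmt) ((c0_abs_le (f m) x).trans_eq (hfn m)) (abs_nonneg _) hM
          _ = M := mul_one _
      have h2 : |∑ n ∈ t.erase m, a n * f n x| ≤ ∑ n ∈ t, |a n| * δ n := by
        refine (Finset.abs_sum_le_sum_abs _ _).trans ?_
        refine le_trans (Finset.sum_le_sum fun n hn => ?_)
          (Finset.sum_le_sum_of_subset_of_nonneg (Finset.erase_subset m t)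
            fun n _ _ => mul_nonneg (abs_nonneg _) (hδpos n).le)
        rw [abs_mul]
        refine mul_le_mul_of_nonneg_left (hfs n x fun hxn => ?_) (abs_nonneg _)
        exact Set.disjoint_left.mp (hUd n m (Finset.ne_of_mem_erase hn)) hxn hxm
      calc |a m * f m x + ∑ n ∈ t.erase m, a n * f n x|
          ≤ |a m * f m x| + |∑ n ∈ t.erase m, a n * f n x| := abs_add_le _ _
        _ ≤ M + ∑ n ∈ t, |a n| * δ n := add_le_add h1 h2
    · push_neg at hmem
      refine le_trans (Finset.abs_sum_le_sum_abs _ _) ?_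
      have : ∑ n ∈ t, |a n * f n x| ≤ ∑ n ∈ t, |a n| * δ n := by
        refine Finset.sum_le_sum fun n hn => ?_
        rw [abs_mul]
        exact mul_le_mul_of_nonneg_left (hfs n x (hmem n hn)) (abs_nonneg _)
      linarith
  -- summability
  have hsummable : ∀ a : C₀(ℕ, ℝ), Summable (fun n => a n • f n) := by
    intro a
    rw [summable_iff_vanishing_norm]
    intro η hη
    have hz : Tendsto (fun n => a n) atTop (𝓝 0) := by
      have := ZeroAtInftyContinuousMapClass.zero_at_infty a
      rwa [cocompact_eq_atTop] at this
    have h2 : ∀ᶠ n in atTop, |a n| < η / 4 := by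
      have := Metric.tendsto_nhds.mp hz (η / 4) (by linarith)
      simpa [Real.dist_eq] using this
    obtain ⟨N, hN⟩ := eventually_atTop.mp h2
    refine ⟨Finset.range N, fun t ht => ?_⟩
    have hM : ∀ n ∈ t, |a n| ≤ η / 4 := by
      intro n hn
      refine (hN n ?_).le
      by_contra hlt
      push_neg at hlt
      exact (Finset.disjoint_left.mp ht) hn (Finset.mem_range.mpr hlt)
    have h3 : ∑ n ∈ t, |a n| * δ n ≤ η / 4 * (ε / 2) := by
      calc ∑ n ∈ t, |a n| * δ n ≤ ∑ n ∈ t, η / 4 * δ n :=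
            Finset.sum_le_sum fun n hn =>
              mul_le_mul_of_nonneg_right (hM n hn) (hδpos n).le
        _ = η / 4 * ∑ n ∈ t, δ n := by rw [Finset.mul_sum]
        _ ≤ η / 4 * (ε / 2) :=
            mul_le_mul_of_nonneg_left (hδfin t) (by linarith)
    have h4 := key (fun n => a n) t (η / 4) (by linarith) hM
    have h5 : η / 4 * (ε / 2) ≤ η / 8 := by nlinarith
    calc ‖∑ n ∈ t, a n • f n‖ ≤ η / 4 + ∑ n ∈ t, |a n| * δ n := h4
      _ ≤ η / 4 + η / 8 := by linarith
      _ < η := by linarith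
  have hTmem : ∀ a : C₀(ℕ, ℝ), (∑' n, a n • f n) ∈ 𝒜 := by
    intro a
    refine hclosed.mem_of_tendsto (hsummable a).hasSum (Eventually.of_forall fun t => ?_)
    exact Submodule.sum_mem _ fun n _ => Submodule.smul_mem _ _ (hfm n)
  refine ⟨{ toFun := fun a => ⟨∑' n, a n • f n, hTmem a⟩
            map_add' := ?_
            map_smul' := ?_ }, ?_⟩
  · intro a b
    apply Subtype.ext
    show ∑' n, (a + b) n • f n = (∑' n, a n • f n) + ∑' n, b n • f n
    rw [← Summable.tsum_add (hsummable a) (hsummable b)]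
    congr 1
    funext n
    rw [ZeroAtInftyContinuousMap.coe_add, Pi.add_apply]
    exact add_smul (a n) (b n) (f n)
  · intro c a
    apply Subtype.ext
    show ∑' n, (c • a) n • f n = c • ∑' n, a n • f n
    rw [← ((hsummable a).hasSum.const_smul c).tsum_eq]
    congr 1
    funext n
    rw [ZeroAtInftyContinuousMap.coe_smul, Pi.smul_apply, smul_eq_mul]
    exact mul_smul c (a n) (f n)
  · intro a
    set F : C₀(L, ℝ) := ∑' n, a n • f n with hF
    have hnorm : ‖(⟨F, hTmem a⟩ : 𝒜)‖ = ‖F‖ := rfl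
    have hs : HasSum (fun n => a n • f n) F := (hsummable a).hasSum
    constructor
    · -- lower bound
      show (1 - ε) * ‖a‖ ≤ ‖(⟨F, hTmem a⟩ : 𝒜)‖
      rw [hnorm]
      have hbound : ∀ n, |a n| ≤ ‖F‖ + 3 / 4 * ε * ‖a‖ := by
        intro n
        obtain ⟨x, hx⟩ : ∃ x, 1 - δ n < |f n x| := by
          by_contra h
          push_neg at h
          have h2 : ‖f n‖ ≤ 1 - δ n := c0_norm_le (f n) (by linarith [hδ1 n]) h
          rw [hfn n] at h2
          linarith [hδpos n]
        have hxU : x ∈ U n := by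
          by_contra hxU
          have h2 := hfs n x hxU
          have h3 := hδlt n
          linarith [hε1]
        have hsx : HasSum (fun m => a m * f m x) (F x) := by
          have := hs.map (evalCLM x) (evalCLM x).continuous
          simpa [Function.comp_def, ZeroAtInftyContinuousMap.coe_smul] using this
        have hc : HasSum (fun m => if m = n then 0 else a m * f m x)
            (F x - a n * f n x) := by
          have h2 : HasSum (fun m => if m = n then a n * f n x else 0)
              (a n * f n x) := hasSum_ite_eq n _
          have h3 := hsx.sub h2
          convert h3 using 1
          · rfl
          funext m
          by_cases h : m = n <;> simp [h]
        have habs2 : |F x - a n * f n x| ≤ ‖a‖ * (ε / 2) := by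
          rw [← hc.tsum_eq, ← Real.norm_eq_abs]
          refine tsum_of_norm_bounded (g := fun m => ‖a‖ * δ m) ?_ ?_
          · have := hδsum.hasSum.mul_left ‖a‖
            rwa [hδtsum] at this
          · intro m
            by_cases h : m = n
            · rw [if_pos h, norm_zero]
              exact mul_nonneg (norm_nonneg a) (hδpos _).le
            · rw [if_neg h, Real.norm_eq_abs, abs_mul]
              have hxm : x ∉ U m := fun hxm =>
                Set.disjoint_left.mp (hUd m n h) hxm hxU
              exact mul_le_mul (c0_abs_le a m) (hfs m x hxm)
                (abs_nonneg _) (norm_nonneg _)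
        have h1 : |a n| * (1 - δ n) ≤ |a n * f n x| := by
          rw [abs_mul]
          exact mul_le_mul_of_nonneg_left hx.le (abs_nonneg _)
        have h2 : |a n * f n x| ≤ |F x| + |F x - a n * f n x| := by
          have h2' := abs_sub (F x) (F x - a n * f n x)
          simpa only [sub_sub_cancel] using h2'
        have h3 : |F x| ≤ ‖F‖ := c0_abs_le F x
        have h4 : |a n| * δ n ≤ ‖a‖ * (ε / 4) :=
          mul_le_mul (c0_abs_le a n) (hδlt n) (hδpos n).le (norm_nonneg _)
        nlinarith [abs_nonneg (a n), norm_nonneg a]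
      have h5 : ‖a‖ ≤ ‖F‖ + 3 / 4 * ε * ‖a‖ :=
        c0_norm_le a (add_nonneg (norm_nonneg F)
          (mul_nonneg (mul_nonneg (by norm_num) hε0.le) (norm_nonneg a))) hbound
      nlinarith [norm_nonneg a]
    · -- upper bound
      show ‖(⟨F, hTmem a⟩ : 𝒜)‖ ≤ (1 + ε) * ‖a‖
      rw [hnorm]
      have hb : ∀ t : Finset ℕ, ‖∑ n ∈ t, a n • f n‖ ≤ ‖a‖ + ‖a‖ * (ε / 2) := by
        intro t
        refine (key (fun n => a n) t ‖a‖ (norm_nonneg a)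
          fun n _ => c0_abs_le a n).trans ?_
        have : ∑ n ∈ t, |a n| * δ n ≤ ‖a‖ * (ε / 2) := by
          calc ∑ n ∈ t, |a n| * δ n ≤ ∑ n ∈ t, ‖a‖ * δ n :=
                Finset.sum_le_sum fun n _ =>
                  mul_le_mul_of_nonneg_right (c0_abs_le a n) (hδpos n).le
            _ = ‖a‖ * ∑ n ∈ t, δ n := by rw [Finset.mul_sum]
            _ ≤ ‖a‖ * (ε / 2) := mul_le_mul_of_nonneg_left (hδfin t) (norm_nonneg _)
        linarith
      have := le_of_tendsto hs.norm (Eventually.of_forall hb)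
      nlinarith [norm_nonneg a]
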